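/- Let p be a real number with p > 1, let a : ℕ → ℝ satisfy a n ≥ 0 for all n, and set R = ((p−1)^(p−1) / p^p)^(1/(p−1)). Define the n-th approximant A n = a 0 + (a 1 + (⋯ + (a n)^p ⋯)^p)^p by backward recurrence: A n = G 0 n where G k n = 0 for k > n and G k n = a k + (G (k+1) n)^p for k ≤ n (real powers, Real.rpow). If there is a constant C such that (a n / R)^(p^n) ≤ C for all n (i.e., the sequence ((a n)/R)^(p^n) is bounded), then the sequence (A n) converges to a finite limit. -/

import Mathlib

open Filter Real

/-- Backward-recurrence approximant of the continued `p`-th power: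
`cpowAppr a p k n = a k + (cpowAppr a p (k+1) n)^p` for `k ≤ n`, and `0` for
`k > n`; real powers (`Real.rpow`). -/
noncomputable def cpowAppr (a : ℕ → ℝ) (p : ℝ) (k n : ℕ) : ℝ :=
  if h : k > n then 0 else a k + cpowAppr a p (k + 1) n ^ p
termination_by n + 1 - k
decreasing_by omega

lemma cpowAppr_nonneg (a : ℕ → ℝ) (p : ℝ) (ha : ∀ n, 0 ≤ a n) (k n : ℕ) :
    0 ≤ cpowAppr a p k n := by
  rw [cpowAppr]
  split
  · exact le_refl 0
  · exact add_nonneg (ha k) (Real.rpow_nonneg (cpowAppr_nonneg a p ha (k+1) n) p)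
termination_by n + 1 - k
decreasing_by omega

lemma cpowAppr_mono (a : ℕ → ℝ) (p : ℝ) (ha : ∀ n, 0 ≤ a n) (hp : 0 ≤ p) (k n : ℕ) :
    cpowAppr a p k n ≤ cpowAppr a p k (n + 1) := by
  rcases lt_or_ge n k with h | h
  · have h1 : cpowAppr a p k n = 0 := by rw [cpowAppr, dif_pos h]
    rw [h1]; exact cpowAppr_nonneg a p ha _ _
  · conv_lhs => rw [cpowAppr]
    conv_rhs => rw [cpowAppr]
    rw [dif_neg (by omega : ¬ k > n), dif_neg (by omega : ¬ k > n + 1)]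
    exact add_le_add_right (Real.rpow_le_rpow (cpowAppr_nonneg a p ha _ _)
      (cpowAppr_mono a p ha hp (k+1) n) hp) _
termination_by n + 1 - k
decreasing_by omega

lemma cpowAppr_le_super (a : ℕ → ℝ) (p : ℝ) (ha : ∀ n, 0 ≤ a n) (hp : 0 ≤ p)
    (B : ℕ → ℝ) (hB0 : ∀ k, 0 ≤ B k) (hB : ∀ k, a k + B (k + 1) ^ p ≤ B k)
    (k n : ℕ) : cpowAppr a p k n ≤ B k := by
  rw [cpowAppr]
  split
  · exact hB0 k
  · exact le_trans (add_le_add_right (Real.rpow_le_rpow (cpowAppr_nonneg a p ha _ _)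
      (cpowAppr_le_super a p ha hp B hB0 hB (k+1) n) hp) _) (hB k)
termination_by n + 1 - k
decreasing_by omega

/-- Jones (1995): for `p > 1` and nonnegative terms, if `((a n)/R)^(p^n)` is
bounded, where `R = ((p−1)^(p−1)/p^p)^(1/(p−1))`, then the continued `p`-th
power converges. -/
theorem continued_power_converges_of_bounded (p : ℝ) (hp : 1 < p)
    (a : ℕ → ℝ) (ha : ∀ n, 0 ≤ a n)
    (hbd : ∃ C : ℝ, ∀ n : ℕ,
      (a n / ((p - 1) ^ (p - 1) / p ^ p) ^ ((1 : ℝ) / (p - 1))) ^ (p ^ n) ≤ C) :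
    ∃ L : ℝ, Tendsto (fun n => cpowAppr a p 0 n) atTop (nhds L) := by
  obtain ⟨C, hC⟩ := hbd
  have hp0 : (0:ℝ) < p := lt_trans one_pos hp
  have hp1 : (0:ℝ) < p - 1 := sub_pos.mpr hp
  set R : ℝ := ((p - 1) ^ (p - 1) / p ^ p) ^ ((1 : ℝ) / (p - 1)) with hRdef
  have hR : 0 < R := Real.rpow_pos_of_pos
    (div_pos (Real.rpow_pos_of_pos hp1 _) (Real.rpow_pos_of_pos hp0 _)) _
  set x : ℝ := p ^ (-((1:ℝ) / (p - 1))) with hxdef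
  have hx : 0 < x := Real.rpow_pos_of_pos hp0 _
  have hxp : x ^ p = x / p := by
    rw [hxdef, ← Real.rpow_mul hp0.le,
      show p ^ (-((1:ℝ) / (p - 1))) / p = p ^ (-((1:ℝ)/(p-1)) - 1) from by
        rw [Real.rpow_sub hp0, Real.rpow_one]]
    congr 1
    field_simp
    ring
  have hRx : R = x - x ^ p := by
    have e1 : R = (p - 1) * p ^ (-(p / (p - 1))) := by
      rw [hRdef, Real.div_rpow (Real.rpow_nonneg hp1.le _) (Real.rpow_nonneg hp0.le _),
        ← Real.rpow_mul hp1.le, ← Real.rpow_mul hp0.le, mul_one_div, mul_one_div,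
        div_self hp1.ne', Real.rpow_one, Real.rpow_neg hp0.le, div_eq_mul_inv]
    have e2 : x - x ^ p = (p - 1) * p ^ (-(p / (p - 1))) := by
      rw [hxp, hxdef,
        show p ^ (-((1:ℝ)/(p-1))) - p ^ (-((1:ℝ)/(p-1))) / p
          = p ^ (-((1:ℝ)/(p-1))) * p ^ (-1:ℝ) * (p - 1) from by
            rw [Real.rpow_neg_one]; field_simp,
        ← Real.rpow_add hp0, mul_comm]
      congr 2
      field_simp
      ring
    rw [e1, e2]
  set c : ℝ := max C 1 with hcdef
  have hc1 : (1:ℝ) ≤ c := le_max_right _ _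
  have hc0 : (0:ℝ) < c := lt_of_lt_of_le one_pos hc1
  have hak : ∀ k : ℕ, a k ≤ R * c ^ ((p⁻¹ ^ k : ℝ)) := by
    intro k
    have hPk : (0:ℝ) < p ^ k := pow_pos hp0 k
    have h1 : (a k / R) ^ (p ^ k : ℝ) ≤ c := le_trans (hC k) (le_max_left _ _)
    have h2 : ((a k / R) ^ (p ^ k : ℝ)) ^ ((p ^ k : ℝ))⁻¹ ≤ c ^ ((p ^ k : ℝ))⁻¹ :=
      Real.rpow_le_rpow (Real.rpow_nonneg (div_nonneg (ha k) hR.le) _) h1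
        (inv_nonneg.mpr hPk.le)
    rw [Real.rpow_rpow_inv (div_nonneg (ha k) hR.le) hPk.ne'] at h2
    rw [div_le_iff₀ hR] at h2
    rw [inv_pow]
    exact h2.trans_eq (mul_comm _ _)
  have hmain : ∀ k n, cpowAppr a p k n ≤ x * c ^ ((p⁻¹ ^ k : ℝ)) := by
    refine cpowAppr_le_super a p ha hp0.le _ (fun k => ?_) (fun k => ?_)
    · exact mul_nonneg hx.le (Real.rpow_nonneg hc0.le _)
    · have ht : (0:ℝ) ≤ c ^ ((p⁻¹ ^ k : ℝ)) := Real.rpow_nonneg hc0.le _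
      have e : (x * c ^ ((p⁻¹ ^ (k+1) : ℝ))) ^ p = x ^ p * c ^ ((p⁻¹ ^ k : ℝ)) := by
        rw [Real.mul_rpow hx.le (Real.rpow_nonneg hc0.le _), ← Real.rpow_mul hc0.le,
          show ((p⁻¹ ^ (k+1) : ℝ)) * p = (p⁻¹ ^ k : ℝ) from by
            rw [pow_succ]; field_simp]
      rw [e]
      calc a k + x ^ p * c ^ ((p⁻¹ ^ k : ℝ))
          ≤ R * c ^ ((p⁻¹ ^ k : ℝ)) + x ^ p * c ^ ((p⁻¹ ^ k : ℝ)) :=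
            add_le_add_left (hak k) _
        _ = x * c ^ ((p⁻¹ ^ k : ℝ)) := by rw [hRx]; ring
  have hmono : Monotone (fun n => cpowAppr a p 0 n) :=
    monotone_nat_of_le_succ (fun n => cpowAppr_mono a p ha hp0.le 0 n)
  have hbdd : BddAbove (Set.range fun n => cpowAppr a p 0 n) := by
    refine ⟨x * c, ?_⟩
    rintro y ⟨n, rfl⟩
    simpa [pow_zero, Real.rpow_one] using hmain 0 n
  exact ⟨_, tendsto_atTop_ciSup hmono hbdd⟩
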